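/- Let μ ≥ 0, δ ∈ (0,1), and let N ≥ 0 be a real number satisfying N ≤ μ + √(2·μ·log(1/δ)) + (2/3)·log(1/δ). Then μ ≥ max{0, N − √(2·N·log(1/δ))}. -/
import Mathlib


open Real

/-- Deterministic implication underlying the lower confidence bound: if `μ ≥ 0`,
`δ ∈ (0,1)`, `N ≥ 0` and `N ≤ μ + √(2·μ·log(1/δ)) + (2/3)·log(1/δ)`, then
`μ ≥ max{0, N − √(2·N·log(1/δ))}`. -/
theorem mean_ge_Uminus (μ δ N : ℝ) (hμ : 0 ≤ μ) (hδ : δ ∈ Set.Ioo (0 : ℝ) 1) (hN : 0 ≤ N)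
    (h : N ≤ μ + Real.sqrt (2 * μ * Real.log (1 / δ)) + (2 / 3) * Real.log (1 / δ)) :
    max 0 (N - Real.sqrt (2 * N * Real.log (1 / δ))) ≤ μ := by
  obtain ⟨hδ0, hδ1⟩ := hδ
  set L := Real.log (1 / δ) with hLdef
  have hLpos : 0 < L := Real.log_pos (by rw [lt_div_iff₀ hδ0]; linarith)
  apply max_le hμ
  by_contra hc
  push_neg at hc
  set s := Real.sqrt (2 * N * L) with hs
  have hs0 : 0 ≤ s := Real.sqrt_nonneg _
  have hsq : s ^ 2 = 2 * N * L := Real.sq_sqrt (by positivity)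
  have h2 : 2 * μ * L ≤ s ^ 2 - 2 * s * L := by nlinarith
  have hsge : 2 * L ≤ s := by
    rcases eq_or_lt_of_le hs0 with h0 | hpos
    · exfalso
      have hN0 : N = 0 := by nlinarith
      nlinarith
    · nlinarith
  have hsqrtμ : Real.sqrt (2 * μ * L) < s - (2 / 3) * L := by
    have h1 : Real.sqrt (2 * μ * L) ≤ Real.sqrt (s ^ 2 - 2 * s * L) :=
      Real.sqrt_le_sqrt h2
    have h2' : Real.sqrt (s ^ 2 - 2 * s * L) < s - (2 / 3) * L := by
      rw [show s - (2 / 3) * L = Real.sqrt ((s - (2 / 3) * L) ^ 2) from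
        (Real.sqrt_sq (by nlinarith)).symm]
      apply Real.sqrt_lt_sqrt (by nlinarith)
      nlinarith
    linarith
  linarith
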